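/- For the Hénon–Heiles system with potential V(q₁,q₂)=q₁(a q₂²+b q₁²), the Poisson bivector P̂=H^{2/3}P̃ is compatible with the bivector H^{10/3}P on the open set {x∈ℝ⁴ : H(x)>0}: their mixed Schouten bracket vanishes, i.e. for all indices i,j,k, Σ_l ( A^{li} ∂B^{jk}/∂x^l + A^{lj} ∂B^{ki}/∂x^l + A^{lk} ∂B^{ij}/∂x^l + B^{li} ∂A^{jk}/∂x^l + B^{lj} ∂A^{ki}/∂x^l + B^{lk} ∂A^{ij}/∂x^l ) = 0, where A=H^{2/3}P̃ and B=H^{10/3}P. -/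

import Mathlib

set_option maxHeartbeats 4000000

open Real

noncomputable section

/-- Partial derivative of `F` in the `k`-th coordinate direction at `x`. -/
def pd (F : (Fin 4 → ℝ) → ℝ) (k : Fin 4) (x : Fin 4 → ℝ) : ℝ :=
  fderiv ℝ F x (Pi.single k 1)

/-- The canonical Poisson bivector on ℝ⁴. -/
def Pcan : Matrix (Fin 4) (Fin 4) ℝ :=
  !![0, 0, 1, 0; 0, 0, 0, 1; -1, 0, 0, 0; 0, -1, 0, 0]

/-- Lie derivative of a bivector field `T` along a vector field `Xf`:
`(L_X T)^{ij} = Σ_k ( X^k ∂T^{ij}/∂x^k − T^{kj} ∂X^i/∂x^k − T^{ik} ∂X^j/∂x^k )`. -/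
def lieDerivBiv (Xf : (Fin 4 → ℝ) → Fin 4 → ℝ)
    (T : (Fin 4 → ℝ) → Matrix (Fin 4) (Fin 4) ℝ)
    (i j : Fin 4) (x : Fin 4 → ℝ) : ℝ :=
  ∑ k, (Xf x k * pd (fun y => T y i j) k x
      - T x k j * pd (fun y => Xf y i) k x
      - T x i k * pd (fun y => Xf y j) k x)

/-- Lie derivative of a 2-form `ω` along a vector field `Xf`:
`(L_X ω)_{ij} = Σ_k ( X^k ∂ω_{ij}/∂x^k + ω_{kj} ∂X^k/∂x^i + ω_{ik} ∂X^k/∂x^j )`. -/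
def lieDerivForm (Xf : (Fin 4 → ℝ) → Fin 4 → ℝ)
    (ω : (Fin 4 → ℝ) → Matrix (Fin 4) (Fin 4) ℝ)
    (i j : Fin 4) (x : Fin 4 → ℝ) : ℝ :=
  ∑ k, (Xf x k * pd (fun y => ω y i j) k x
      + ω x k j * pd (fun y => Xf y k) i x
      + ω x i k * pd (fun y => Xf y k) j x)

/-- The Jacobiator of a bivector field `A`; `A` satisfies the Jacobi identity iff it
vanishes for all indices `i j k`. -/
def jac (A : (Fin 4 → ℝ) → Matrix (Fin 4) (Fin 4) ℝ)
    (i j k : Fin 4) (x : Fin 4 → ℝ) : ℝ :=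
  ∑ l, (A x l i * pd (fun y => A y j k) l x
      + A x l j * pd (fun y => A y k i) l x
      + A x l k * pd (fun y => A y i j) l x)

/-- The mixed Schouten bracket expression of two bivector fields `A` and `B`. -/
def mixedSchouten (A B : (Fin 4 → ℝ) → Matrix (Fin 4) (Fin 4) ℝ)
    (i j k : Fin 4) (x : Fin 4 → ℝ) : ℝ :=
  ∑ l, (A x l i * pd (fun y => B y j k) l x
      + A x l j * pd (fun y => B y k i) l x
      + A x l k * pd (fun y => B y i j) l x
      + B x l i * pd (fun y => A y j k) l x
      + B x l j * pd (fun y => A y k i) l x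
      + B x l k * pd (fun y => A y i j) l x)

/-- Hénon–Heiles potential `V = q₁ (a q₂² + b q₁²)`. -/
def VHH (a b : ℝ) (x : Fin 4 → ℝ) : ℝ := x 0 * (a * (x 1) ^ 2 + b * (x 0) ^ 2)

/-- Hénon–Heiles Hamiltonian. -/
def HHH (a b : ℝ) (x : Fin 4 → ℝ) : ℝ := ((x 2) ^ 2 + (x 3) ^ 2) / 2 + VHH a b x

/-- Hénon–Heiles Hamiltonian vector field `X = (p₁, p₂, −∂V/∂q₁, −∂V/∂q₂)`. -/
def XHH (a b : ℝ) (x : Fin 4 → ℝ) : Fin 4 → ℝ :=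
  ![x 2, x 3, -(pd (VHH a b) 0 x), -(pd (VHH a b) 1 x)]

/-- The invariant bivector `P̃` of the Hénon–Heiles system. -/
def PtHH (a b : ℝ) (x : Fin 4 → ℝ) : Matrix (Fin 4) (Fin 4) ℝ :=
  let q1 := x 0; let q2 := x 1; let p1 := x 2; let p2 := x 3
  let e12 := (4 / 3) * (q2 * p1 - q1 * p2)
  let e13 := p1 ^ 2 - p2 ^ 2 - (2 / 3) * a * q1 * q2 ^ 2 + 2 * b * q1 ^ 3
  let e14 := 2 * p1 * p2 + (8 / 3) * a * q1 ^ 2 * q2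
  let e23 := 2 * p1 * p2 + (4 / 3) * a * q2 ^ 3 + 4 * b * q1 ^ 2 * q2
  let e24 := p2 ^ 2 - p1 ^ 2 + (2 / 3) * a * q1 * q2 ^ 2 - 2 * b * q1 ^ 3
  let e34 := 4 * a * q1 * q2 * p1 - (2 * a * q2 ^ 2 + 6 * b * q1 ^ 2) * p2
  !![0, e12, e13, e14;
     -(e12), 0, e23, e24;
     -(e13), -(e23), 0, e34;
     -(e14), -(e24), -(e34), 0]

/-- The invariant 2-form `ω̃` of the Hénon–Heiles system. -/
def OmHH (a b : ℝ) (x : Fin 4 → ℝ) : Matrix (Fin 4) (Fin 4) ℝ :=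
  let q1 := x 0; let q2 := x 1; let p1 := x 2; let p2 := x 3
  let w12 := ((a * q2 ^ 2 + 3 * b * q1 ^ 2) / 2) * p2 - a * q1 * q2 * p1
  let w13 := a * q1 * q2 ^ 2 / 6 - b * q1 ^ 3 / 2 - (p1 ^ 2 - p2 ^ 2) / 4
  let w14 := -(a * q2 ^ 3 / 3 + b * q1 ^ 2 * q2 + p1 * p2 / 2)
  let w23 := -(2 * a * q1 ^ 2 * q2 / 3 + p1 * p2 / 2)
  let w24 := -(a * q1 * q2 ^ 2) / 6 + b * q1 ^ 3 / 2 + (p1 ^ 2 - p2 ^ 2) / 4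
  let w34 := (q1 * p2 - q2 * p1) / 3
  !![0, w12, w13, w14;
     -(w12), 0, w23, w24;
     -(w13), -(w23), 0, w34;
     -(w14), -(w24), -(w34), 0]

/-- The bivector `A = H^{2/3} P̃`. -/
def AHH (a b : ℝ) (x : Fin 4 → ℝ) : Matrix (Fin 4) (Fin 4) ℝ :=
  Matrix.of fun i j => (HHH a b x) ^ ((2 : ℝ) / 3) * PtHH a b x i j

/-- The bivector `B = H^{10/3} P`. -/
def BHH (a b : ℝ) (x : Fin 4 → ℝ) : Matrix (Fin 4) (Fin 4) ℝ :=
  Matrix.of fun i j => (HHH a b x) ^ ((10 : ℝ) / 3) * Pcan i j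

section PDToolkit

variable {F G : (Fin 4 → ℝ) → ℝ} {x : Fin 4 → ℝ} {k : Fin 4}

theorem pd_coord (i : Fin 4) : pd (fun y => y i) k x = if k = i then 1 else 0 := by
  rw [pd, (hasFDerivAt_apply i x).fderiv]
  simp [Pi.single_apply, eq_comm]

theorem pd_const (c : ℝ) : pd (fun _ => c) k x = 0 := by
  simp [pd]

theorem pd_add (hF : DifferentiableAt ℝ F x) (hG : DifferentiableAt ℝ G x) :
    pd (fun y => F y + G y) k x = pd F k x + pd G k x := by
  simp [pd, fderiv_fun_add hF hG]

theorem pd_sub (hF : DifferentiableAt ℝ F x) (hG : DifferentiableAt ℝ G x) :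
    pd (fun y => F y - G y) k x = pd F k x - pd G k x := by
  simp [pd, fderiv_fun_sub hF hG]

theorem pd_neg : pd (fun y => -F y) k x = -pd F k x := by
  simp [pd, fderiv_neg]

theorem pd_mul (hF : DifferentiableAt ℝ F x) (hG : DifferentiableAt ℝ G x) :
    pd (fun y => F y * G y) k x = F x * pd G k x + G x * pd F k x := by
  simp [pd, fderiv_fun_mul hF hG]

theorem pd_div_const (c : ℝ) (hF : DifferentiableAt ℝ F x) :
    pd (fun y => F y / c) k x = pd F k x / c := by
  simp only [div_eq_mul_inv]
  rw [pd, fderiv_mul_const hF]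
  simp [pd, mul_comm]

theorem pd_mul_const (c : ℝ) (hF : DifferentiableAt ℝ F x) :
    pd (fun y => F y * c) k x = pd F k x * c := by
  rw [pd, fderiv_mul_const hF]
  simp [pd, mul_comm]

theorem pd_sq (hF : DifferentiableAt ℝ F x) :
    pd (fun y => F y ^ 2) k x = 2 * F x * pd F k x := by
  have h : (fun y => F y ^ 2) = fun y => F y * F y := by funext y; ring
  rw [h, pd_mul hF hF]; ring

theorem pd_cube (hF : DifferentiableAt ℝ F x) :
    pd (fun y => F y ^ 3) k x = 3 * F x ^ 2 * pd F k x := by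
  have h : (fun y => F y ^ 3) = fun y => F y * F y ^ 2 := by funext y; ring
  rw [h, pd_mul (G := fun y => F y ^ 2) hF (hF.pow 2), pd_sq hF]; ring

theorem pd_rpow (c : ℝ) (hF : DifferentiableAt ℝ F x) (h : F x ≠ 0) :
    pd (fun y => F y ^ c) k x = c * F x ^ (c - 1) * pd F k x := by
  rw [pd, ((hF.hasFDerivAt).rpow_const (Or.inl h)).fderiv]
  simp [pd]

end PDToolkit

theorem diffH (a b : ℝ) (x : Fin 4 → ℝ) : DifferentiableAt ℝ (HHH a b) x := by
  unfold HHH VHH; fun_prop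

theorem diffPt (a b : ℝ) (x : Fin 4 → ℝ) (i j : Fin 4) :
    DifferentiableAt ℝ (fun y => PtHH a b y i j) x := by
  fin_cases i <;> fin_cases j <;>
    · simp only [PtHH, Matrix.cons_val', Matrix.cons_val_zero, Matrix.cons_val_one,
        Matrix.cons_val_two, Matrix.cons_val_three, Matrix.tail_cons, Matrix.head_cons,
        Matrix.empty_val', Matrix.cons_val_fin_one, Matrix.head_fin_const, Matrix.of_apply,
        Fin.isValue, Fin.zero_eta, Fin.mk_one, Fin.reduceFinMk]
      fun_prop

theorem pdA (a b : ℝ) (x : Fin 4 → ℝ) (hx : 0 < HHH a b x) (i j l : Fin 4) :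
    pd (fun y => AHH a b y i j) l x =
      HHH a b x ^ ((2 : ℝ) / 3) * pd (fun y => PtHH a b y i j) l x
      + PtHH a b x i j * ((2 : ℝ) / 3 * HHH a b x ^ ((2 : ℝ) / 3 - 1) * pd (HHH a b) l x) := by
  have h1 : (fun y => AHH a b y i j)
      = fun y => (HHH a b y) ^ ((2 : ℝ) / 3) * PtHH a b y i j := rfl
  rw [h1, pd_mul ((diffH a b x).rpow_const (Or.inl hx.ne')) (diffPt a b x i j),
    pd_rpow _ (diffH a b x) hx.ne']

theorem pdB (a b : ℝ) (x : Fin 4 → ℝ) (hx : 0 < HHH a b x) (i j l : Fin 4) :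
    pd (fun y => BHH a b y i j) l x =
      (10 : ℝ) / 3 * HHH a b x ^ ((10 : ℝ) / 3 - 1) * pd (HHH a b) l x * Pcan i j := by
  have h1 : (fun y => BHH a b y i j)
      = fun y => (HHH a b y) ^ ((10 : ℝ) / 3) * Pcan i j := rfl
  rw [h1, pd_mul_const _ ((diffH a b x).rpow_const (Or.inl hx.ne')),
    pd_rpow _ (diffH a b x) hx.ne']


def gradPt (a b : ℝ) (x : Fin 4 → ℝ) : Fin 4 → Fin 4 → Fin 4 → ℝ := fun i j =>
  let q1 := x 0; let q2 := x 1; let p1 := x 2; let p2 := x 3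
  let g12 : Fin 4 → ℝ := ![-(4/3*p2), 4/3*p1, 4/3*q2, -(4/3*q1)]
  let g13 : Fin 4 → ℝ := ![-(2/3*a*q2^2) + 6*b*q1^2, -(4/3*a*q1*q2), 2*p1, -(2*p2)]
  let g14 : Fin 4 → ℝ := ![16/3*a*q1*q2, 8/3*a*q1^2, 2*p2, 2*p1]
  let g23 : Fin 4 → ℝ := ![8*b*q1*q2, 4*a*q2^2 + 4*b*q1^2, 2*p2, 2*p1]
  let g34 : Fin 4 → ℝ :=
    ![4*a*q2*p1 - 12*b*q1*p2, 4*a*q1*p1 - 4*a*q2*p2, 4*a*q1*q2, -(2*a*q2^2 + 6*b*q1^2)]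
  let z : Fin 4 → ℝ := ![0, 0, 0, 0]
  ![![z, g12, g13, g14],
    ![fun l => -(g12 l), z, g23, fun l => -(g13 l)],
    ![fun l => -(g13 l), fun l => -(g23 l), z, g34],
    ![fun l => -(g14 l), g13, fun l => -(g34 l), z]] i j

theorem pdH (a b : ℝ) (x : Fin 4 → ℝ) (l : Fin 4) :
    pd (HHH a b) l x = ![a * x 1 ^ 2 + 3 * b * x 0 ^ 2, 2 * a * x 0 * x 1, x 2, x 3] l := by
  have h1 : HHH a b = fun y => (y 2 ^ 2 + y 3 ^ 2) / 2 + y 0 * (a * y 1 ^ 2 + b * y 0 ^ 2) := rfl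
  rw [h1]
  fin_cases l <;>
    · simp (disch := fun_prop) only [pd_add, pd_sub, pd_neg, pd_mul, pd_div_const,
        pd_mul_const, pd_sq, pd_cube, pd_coord, pd_const, Fin.reduceEq, reduceIte,
        Matrix.cons_val', Matrix.cons_val_zero, Matrix.cons_val_one, Matrix.cons_val_two,
        Matrix.cons_val_three, Matrix.tail_cons, Matrix.head_cons, Matrix.empty_val',
        Matrix.cons_val_fin_one, Matrix.head_fin_const, Fin.isValue, Fin.zero_eta,
        Fin.mk_one, Fin.reduceFinMk]
      ring

theorem pdPt (a b : ℝ) (x : Fin 4 → ℝ) (i j l : Fin 4) :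
    pd (fun y => PtHH a b y i j) l x = gradPt a b x i j l := by
  fin_cases i <;> fin_cases j <;> fin_cases l <;>
    · simp (disch := fun_prop) only [PtHH, gradPt, pd_add, pd_sub, pd_neg, pd_mul,
        pd_div_const, pd_mul_const, pd_sq, pd_cube, pd_coord, pd_const, Fin.reduceEq,
        reduceIte, Matrix.cons_val', Matrix.cons_val_zero, Matrix.cons_val_one,
        Matrix.cons_val_two, Matrix.cons_val_three, Matrix.tail_cons, Matrix.head_cons,
        Matrix.empty_val', Matrix.cons_val_fin_one, Matrix.head_fin_const, Matrix.of_apply,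
        Fin.isValue, Fin.zero_eta, Fin.mk_one, Fin.reduceFinMk]
      try ring

/-- the mixed Schouten bracket of `A = H^{2/3}P̃` and `B = H^{10/3}P`
vanishes on the set `{H > 0}`. -/
theorem statement3 (a b : ℝ) :
    ∀ x : Fin 4 → ℝ, 0 < HHH a b x →
      ∀ i j k : Fin 4, mixedSchouten (AHH a b) (BHH a b) i j k x = 0 := by
  intro x hx i j k
  have e1 : HHH a b x ^ ((2:ℝ)/3) * HHH a b x ^ ((10:ℝ)/3 - 1) = HHH a b x ^ (3:ℕ) := by
    rw [← Real.rpow_natCast (HHH a b x) 3, ← Real.rpow_add hx]; norm_num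
  have e2 : HHH a b x ^ ((10:ℝ)/3) * HHH a b x ^ ((2:ℝ)/3)
      = HHH a b x ^ (3:ℕ) * HHH a b x := by
    rw [← Real.rpow_add hx, (by norm_num : ((10:ℝ)/3 + 2/3) = ((4:ℕ):ℝ)),
      Real.rpow_natCast]
    ring
  have e3 : HHH a b x ^ ((10:ℝ)/3) * HHH a b x ^ ((2:ℝ)/3 - 1) = HHH a b x ^ (3:ℕ) := by
    rw [← Real.rpow_natCast (HHH a b x) 3, ← Real.rpow_add hx]; norm_num
  have L1 : ∀ u v w : ℝ,
      (HHH a b x ^ ((2:ℝ)/3) * u) * ((10:ℝ)/3 * HHH a b x ^ ((10:ℝ)/3 - 1) * v * w)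
      = HHH a b x ^ (3:ℕ) * ((10:ℝ)/3 * u * v * w) := by
    intro u v w; linear_combination ((10:ℝ)/3 * u * v * w) * e1
  have L2 : ∀ u v w z : ℝ, (HHH a b x ^ ((10:ℝ)/3) * u) *
        (HHH a b x ^ ((2:ℝ)/3) * v + w * ((2:ℝ)/3 * HHH a b x ^ ((2:ℝ)/3 - 1) * z))
      = HHH a b x ^ (3:ℕ) * HHH a b x * (u * v)
        + HHH a b x ^ (3:ℕ) * ((2:ℝ)/3 * u * w * z) := by
    intro u v w z; linear_combination (u*v) * e2 + ((2:ℝ)/3 * u * w * z) * e3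
  simp only [mixedSchouten, Fin.sum_univ_four]
  simp only [pdA a b x hx, pdB a b x hx]
  simp only [AHH, BHH, Matrix.of_apply]
  simp only [L1, L2]
  simp only [pdPt, pdH]
  fin_cases i <;> fin_cases j <;> fin_cases k <;>
    · simp only [gradPt, PtHH, Pcan, HHH, VHH, Matrix.cons_val', Matrix.cons_val_zero,
        Matrix.cons_val_one, Matrix.cons_val_two, Matrix.cons_val_three, Matrix.tail_cons,
        Matrix.head_cons, Matrix.empty_val', Matrix.cons_val_fin_one, Matrix.head_fin_const,
        Matrix.of_apply, Fin.isValue, Fin.zero_eta, Fin.mk_one, Fin.reduceFinMk]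
      try ring

end
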